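/- Let g ≥ 2, r ≥ 1, d ≥ 1, s, μ be integers with d not a perfect square, and let ε ∈ {1, −1}. If there exist integers x₀, y₀ with y₀ ≠ 0, x₀ ≡ μ·y₀ (mod 2g−2) and (r·x₀ + 2(g−1))² − d·r²·y₀² = 4(g−1)·(ε·r − r·s + g−1), then there exist infinitely many pairs of integers (x, y) with x ≡ μ·y (mod 2g−2) and (r·x + 2(g−1))² − d·r²·y² = 4(g−1)·(ε·r − r·s + g−1). -/
import Mathlib

/-- Auxiliary: there is a Pell solution congruent to `(1,0)` modulo any positive `M`,
with positive `x > 1` and `y > 0`. -/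
lemma pell_aux {d : ℤ} (hd : 0 < d) (hdsq : ¬ IsSquare d) (M : ℤ) (hM : 0 < M) :
    ∃ b : Pell.Solution₁ d, 1 < b.x ∧ 0 < b.y ∧ M ∣ b.x - 1 ∧ M ∣ b.y := by
  obtain ⟨a, hax, hay⟩ := Pell.Solution₁.exists_pos_of_not_isSquare hd hdsq
  have hax0 : (0:ℤ) < a.x := by linarith
  suffices H : ∀ m n : ℕ, m < n →
      (((a^m).x : ZMod M.toNat) = ((a^n).x : ZMod M.toNat)) →
      (((a^m).y : ZMod M.toNat) = ((a^n).y : ZMod M.toNat)) →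
      ∃ b : Pell.Solution₁ d, 1 < b.x ∧ 0 < b.y ∧ M ∣ b.x - 1 ∧ M ∣ b.y by
    haveI : NeZero M.toNat := ⟨by omega⟩
    obtain ⟨i, j, hij, hF⟩ := Finite.exists_ne_map_eq_of_infinite
      (fun k : ℕ => ((((a^k).x : ZMod M.toNat)), (((a^k).y : ZMod M.toNat))))
    have h1 : (((a^i).x : ZMod M.toNat)) = ((a^j).x : ZMod M.toNat) := congrArg Prod.fst hF
    have h2 : (((a^i).y : ZMod M.toNat)) = ((a^j).y : ZMod M.toNat) := congrArg Prod.snd hF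
    rcases hij.lt_or_gt with h | h
    · exact H i j h h1 h2
    · exact H j i h h1.symm h2.symm
  intro m n hmn hx hy
  have hcast : ((M.toNat : ℤ)) = M := Int.toNat_of_nonneg hM.le
  have hMx : M ∣ (a^n).x - (a^m).x := by
    have h := ((ZMod.intCast_eq_intCast_iff _ _ _).mp hx).dvd
    rwa [hcast] at h
  have hMy : M ∣ (a^n).y - (a^m).y := by
    have h := ((ZMod.intCast_eq_intCast_iff _ _ _).mp hy).dvd
    rwa [hcast] at h
  obtain ⟨j, rfl⟩ : ∃ j : ℕ, n = (j + 1) + m := ⟨n - m - 1, by omega⟩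
  set k := j + 1 with hkdef
  have hsplit : a ^ (k + m) = a ^ k * a ^ m := by
    rw [pow_add]
  have hxe : (a^(k+m)).x = (a^k).x * (a^m).x + d * ((a^k).y * (a^m).y) := by
    rw [hsplit]; exact Pell.Solution₁.x_mul _ _
  have hye : (a^(k+m)).y = (a^k).x * (a^m).y + (a^k).y * (a^m).x := by
    rw [hsplit]; exact Pell.Solution₁.y_mul _ _
  obtain ⟨c₁, hc₁⟩ := hMx
  obtain ⟨c₂, hc₂⟩ := hMy
  have hpq : (a^m).x ^ 2 - d * (a^m).y ^ 2 = 1 := (a^m).prop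
  have hypos : 0 < (a^k).y := Pell.Solution₁.y_pow_succ_pos hax0 hay j
  have hxpos : 0 < (a^k).x := Pell.Solution₁.x_pow_pos hax0 k
  have hx1 : 1 < (a^k).x := by
    nlinarith [(a^k).prop, mul_pos hd (mul_pos hypos hypos)]
  refine ⟨a ^ k, hx1, hypos, ⟨(a^m).x * c₁ - d * ((a^m).y * c₂), ?_⟩,
    ⟨(a^m).x * c₂ - (a^m).y * c₁, ?_⟩⟩
  · linear_combination (a^m).x * hc₁ - d * (a^m).y * hc₂ - (a^m).x * hxe +
      d * (a^m).y * hye - ((a^k).x - 1) * hpq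
  · linear_combination (-(a^m).y) * hc₁ + (a^m).x * hc₂ + (a^m).y * hxe -
      (a^m).x * hye - (a^k).y * hpq

/-- If `d` is not a square and the Pell-type equation
`(rx + 2(g−1))² − dr²y² = 4(g−1)(εr − rs + g−1)` has a solution with `y₀ ≠ 0`
satisfying the congruence `x₀ ≡ μy₀ (mod 2g−2)`, then it has infinitely many
such solutions. -/
theorem pell_infinitely_many_solutions
    (g r s d μ ε : ℤ) (hg : 2 ≤ g) (hr : 1 ≤ r) (hd : 1 ≤ d)
    (hdsq : ¬ IsSquare d) (hε : ε = 1 ∨ ε = -1)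
    (hsol : ∃ x₀ y₀ : ℤ, y₀ ≠ 0 ∧ x₀ ≡ μ * y₀ [ZMOD (2 * g - 2)] ∧
      (r * x₀ + 2 * (g - 1)) ^ 2 - d * r ^ 2 * y₀ ^ 2
        = 4 * (g - 1) * (ε * r - r * s + (g - 1))) :
    {p : ℤ × ℤ | p.1 ≡ μ * p.2 [ZMOD (2 * g - 2)] ∧
      (r * p.1 + 2 * (g - 1)) ^ 2 - d * r ^ 2 * p.2 ^ 2
        = 4 * (g - 1) * (ε * r - r * s + (g - 1))}.Infinite := by
  obtain ⟨x₀, y₀, hy₀, hcong, heq⟩ := hsol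
  have hd0 : (0:ℤ) < d := by linarith
  have hr0 : (r:ℤ) ≠ 0 := by linarith
  have hM : (0:ℤ) < r * (2 * g - 2) := mul_pos (by linarith) (by linarith)
  obtain ⟨b, hbx, hby, hbxd, hbyd⟩ := pell_aux hd0 hdsq _ hM
  have hb0 : (0:ℤ) < b.x := by linarith
  -- abbreviations
  obtain ⟨A, hA⟩ : ∃ A : ℤ, A = r * x₀ + 2 * (g - 1) := ⟨_, rfl⟩
  obtain ⟨B, hB⟩ : ∃ B : ℤ, B = r * y₀ := ⟨_, rfl⟩
  have hN : A ^ 2 - d * B ^ 2 = 4 * (g - 1) * (ε * r - r * s + (g - 1)) := by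
    linear_combination heq + (A + r * x₀ + 2 * (g - 1)) * hA - d * (B + r * y₀) * hB
  -- congruences for powers of b
  have key : ∀ n : ℕ, (r * (2 * g - 2)) ∣ (b ^ (n+1)).x - 1 ∧
      (r * (2 * g - 2)) ∣ (b ^ (n+1)).y := by
    intro n
    induction n with
    | zero => simpa [pow_one] using ⟨hbxd, hbyd⟩
    | succ n ih =>
      obtain ⟨⟨k, hk⟩, ⟨l, hl⟩⟩ := ih
      obtain ⟨k₀, hk₀⟩ := hbxd
      obtain ⟨l₀, hl₀⟩ := hbyd
      have hxe : (b ^ (n+1+1)).x = (b ^ (n+1)).x * b.x + d * ((b ^ (n+1)).y * b.y) := by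
        rw [pow_succ]; exact Pell.Solution₁.x_mul _ _
      have hye : (b ^ (n+1+1)).y = (b ^ (n+1)).x * b.y + (b ^ (n+1)).y * b.x := by
        rw [pow_succ]; exact Pell.Solution₁.y_mul _ _
      constructor
      · exact ⟨(b ^ (n+1)).x * k₀ + k + d * (b.y * l),
          by linear_combination hxe + (b ^ (n+1)).x * hk₀ + hk + d * b.y * hl⟩
      · exact ⟨(b ^ (n+1)).x * l₀ + l * b.x,
          by linear_combination hye + (b ^ (n+1)).x * hl₀ + b.x * hl⟩
  have hupos : ∀ n : ℕ, 0 < (b ^ (n+1)).x := fun n => Pell.Solution₁.x_pow_pos hb0 (n+1)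
  have hvpos : ∀ n : ℕ, 0 < (b ^ (n+1)).y := fun n => Pell.Solution₁.y_pow_succ_pos hb0 hby n
  have humono : StrictMono (fun n : ℕ => (b ^ (n+1)).x) := by
    apply strictMono_nat_of_lt_succ
    intro n
    have hxe : (b ^ (n+1+1)).x = (b ^ (n+1)).x * b.x + d * ((b ^ (n+1)).y * b.y) := by
      rw [pow_succ]; exact Pell.Solution₁.x_mul _ _
    have h1 := hupos n; have h2 := hvpos n
    show (b ^ (n+1)).x < (b ^ (n+1+1)).x
    nlinarith [hxe, mul_pos hd0 (mul_pos h2 hby)]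
  have hvmono : StrictMono (fun n : ℕ => (b ^ (n+1)).y) := by
    apply strictMono_nat_of_lt_succ
    intro n
    have hye : (b ^ (n+1+1)).y = (b ^ (n+1)).x * b.y + (b ^ (n+1)).y * b.x := by
      rw [pow_succ]; exact Pell.Solution₁.y_mul _ _
    have h1 := hupos n; have h2 := hvpos n
    show (b ^ (n+1)).y < (b ^ (n+1+1)).y
    nlinarith [hye, mul_pos h1 hby]
  -- divisibility needed to define the new solutions
  have hrM : (r:ℤ) ∣ r * (2 * g - 2) := ⟨2 * g - 2, rfl⟩
  have hrdu : ∀ n : ℕ, (r:ℤ) ∣ (b ^ (n+1)).x - 1 := fun n => hrM.trans (key n).1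
  have hrdv : ∀ n : ℕ, (r:ℤ) ∣ (b ^ (n+1)).y := fun n => hrM.trans (key n).2
  have hdvd1 : ∀ n : ℕ, (r:ℤ) ∣ A * (b ^ (n+1)).x + d * B * (b ^ (n+1)).y - 2 * (g - 1) := by
    intro n
    have e : A * (b ^ (n+1)).x + d * B * (b ^ (n+1)).y - 2 * (g - 1)
        = A * ((b ^ (n+1)).x - 1) + d * B * (b ^ (n+1)).y + r * x₀ := by
      rw [hA]; ring
    rw [e]
    exact dvd_add (dvd_add (dvd_mul_of_dvd_right (hrdu n) A)
      (dvd_mul_of_dvd_right (hrdv n) (d * B))) ⟨x₀, rfl⟩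
  have hdvd2 : ∀ n : ℕ, (r:ℤ) ∣ A * (b ^ (n+1)).y + B * (b ^ (n+1)).x := by
    intro n
    have e : A * (b ^ (n+1)).y + B * (b ^ (n+1)).x
        = A * (b ^ (n+1)).y + r * (y₀ * (b ^ (n+1)).x) := by
      rw [hB]; ring
    rw [e]
    exact dvd_add (dvd_mul_of_dvd_right (hrdv n) A) ⟨y₀ * (b ^ (n+1)).x, rfl⟩
  have hP : ∀ n : ℕ, r * ((A * (b ^ (n+1)).x + d * B * (b ^ (n+1)).y - 2 * (g - 1)) / r)
      = A * (b ^ (n+1)).x + d * B * (b ^ (n+1)).y - 2 * (g - 1) :=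
    fun n => Int.mul_ediv_cancel' (hdvd1 n)
  have hQ : ∀ n : ℕ, r * ((A * (b ^ (n+1)).y + B * (b ^ (n+1)).x) / r)
      = A * (b ^ (n+1)).y + B * (b ^ (n+1)).x :=
    fun n => Int.mul_ediv_cancel' (hdvd2 n)
  apply Set.infinite_of_injective_forall_mem
    (f := fun n : ℕ => ((A * (b ^ (n+1)).x + d * B * (b ^ (n+1)).y - 2 * (g - 1)) / r,
      (A * (b ^ (n+1)).y + B * (b ^ (n+1)).x) / r))
  · -- injectivity
    intro m n hfeq
    by_contra hne
    have h1 : (A * (b ^ (m+1)).x + d * B * (b ^ (m+1)).y - 2 * (g - 1)) / r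
        = (A * (b ^ (n+1)).x + d * B * (b ^ (n+1)).y - 2 * (g - 1)) / r :=
      congrArg Prod.fst hfeq
    have h2 : (A * (b ^ (m+1)).y + B * (b ^ (m+1)).x) / r
        = (A * (b ^ (n+1)).y + B * (b ^ (n+1)).x) / r :=
      congrArg Prod.snd hfeq
    have hPP : A * (b ^ (m+1)).x + d * B * (b ^ (m+1)).y
        = A * (b ^ (n+1)).x + d * B * (b ^ (n+1)).y := by
      linear_combination r * h1 - hP m + hP n
    have hQQ : A * (b ^ (m+1)).y + B * (b ^ (m+1)).x
        = A * (b ^ (n+1)).y + B * (b ^ (n+1)).x := by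
      linear_combination r * h2 - hQ m + hQ n
    have hz : (A ^ 2 - d * B ^ 2) * ((b ^ (m+1)).x - (b ^ (n+1)).x)
        * ((b ^ (m+1)).y - (b ^ (n+1)).y) = 0 := by
      linear_combination (A * ((b ^ (m+1)).y - (b ^ (n+1)).y)) * hPP -
        (d * B * ((b ^ (m+1)).y - (b ^ (n+1)).y)) * hQQ
    have hdu : (b ^ (m+1)).x - (b ^ (n+1)).x ≠ 0 :=
      sub_ne_zero.mpr (humono.injective.ne (by simpa using hne))
    have hdv : (b ^ (m+1)).y - (b ^ (n+1)).y ≠ 0 :=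
      sub_ne_zero.mpr (hvmono.injective.ne (by simpa using hne))
    have hN0 : A ^ 2 - d * B ^ 2 = 0 := by
      rcases mul_eq_zero.mp hz with h | h
      · rcases mul_eq_zero.mp h with h' | h'
        · exact h'
        · exact absurd h' hdu
      · exact absurd h hdv
    have hB0 : B ≠ 0 := by
      rw [hB]
      exact mul_ne_zero hr0 hy₀
    have hdvdsq : B ^ 2 ∣ A ^ 2 := ⟨d, by linarith⟩
    obtain ⟨c, hc⟩ := (Int.pow_dvd_pow_iff (two_ne_zero)).mp hdvdsq
    have hdc : d = c * c := by
      have h3 : B ^ 2 * d = B ^ 2 * (c * c) := by linear_combination -hN0 + (A + B * c) * hc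
      exact mul_left_cancel₀ (pow_ne_zero 2 hB0) h3
    exact hdsq ⟨c, hdc⟩
  · -- membership
    intro n
    simp only [Set.mem_setOf_eq]
    constructor
    · -- congruence
      show _ ≡ μ * _ [ZMOD (2 * g - 2)]
      rw [Int.modEq_iff_dvd]
      obtain ⟨k, hk⟩ := (key n).1
      obtain ⟨l, hl⟩ := (key n).2
      obtain ⟨t, ht⟩ := hcong.dvd
      refine ⟨μ * A * l + μ * B * k - A * k - d * B * l + t, ?_⟩
      apply mul_left_cancel₀ hr0
      linear_combination μ * hQ n - hP n + (μ * B - A) * hk + (μ * A - d * B) * hl +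
        r * ht - hA + μ * hB
    · -- equation
      show (r * _ + 2 * (g - 1)) ^ 2 - d * r ^ 2 * _ ^ 2 = _
      have hprop : (b ^ (n+1)).x ^ 2 - d * (b ^ (n+1)).y ^ 2 = 1 := (b ^ (n+1)).prop
      linear_combination
        (r * ((A * (b ^ (n+1)).x + d * B * (b ^ (n+1)).y - 2 * (g - 1)) / r) + 2 * (g - 1)
          + A * (b ^ (n+1)).x + d * B * (b ^ (n+1)).y) * hP n
        - d * (r * ((A * (b ^ (n+1)).y + B * (b ^ (n+1)).x) / r)
          + A * (b ^ (n+1)).y + B * (b ^ (n+1)).x) * hQ n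
        + ((b ^ (n+1)).x ^ 2 - d * (b ^ (n+1)).y ^ 2) * hN
        + (4 * (g - 1) * (ε * r - r * s + (g - 1))) * hprop
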